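/- arXiv:2201.09085 — 8 statements merged into one kernel-verified Lean document; each statement's English description precedes it below -/
import Mathlib

section
/- For any complex number s with Re s > 0 and nonnegative reals L, R, D with L + R + D > 0, the modulus of the admittance is bounded by (|s|/Re s) times the admittance at |s|: |ρ_s| ≤ (|s| / Re s) · ρ_{|s|}, where ρ_t = t / (L t² + R t + D) for t > 0. -/
/-- |ρ_s| ≤ (|s|/Re s) · ρ_{|s|}. -/
theorem admittance_abs_le (s : ℂ) (hs : 0 < s.re) (L R D : ℝ)
    (hL : 0 ≤ L) (hR : 0 ≤ R) (hD : 0 ≤ D) (hsum : 0 < L + R + D) :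
    ‖s / ((L : ℂ) * s ^ 2 + (R : ℂ) * s + (D : ℂ))‖ ≤
      (‖s‖ / s.re) *
        (‖s‖ / (L * (‖s‖) ^ 2 + R * ‖s‖ + D)) := by
  set a := ‖s‖ with ha_def
  set x := s.re with hx_def
  have hxa : x ≤ a := Complex.re_le_norm s
  have ha : 0 < a := lt_of_lt_of_le hs hxa
  have hcases : 0 < L ∨ 0 < R ∨ 0 < D := by
    by_contra h; push_neg at h; linarith [h.1, h.2.1, h.2.2]
  have hQ : 0 < L * a ^ 2 + R * a + D := by
    rcases hcases with h | h | h
    · nlinarith [mul_pos h (pow_pos ha 2), mul_nonneg hR ha.le]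
    · nlinarith [mul_nonneg hL (pow_pos ha 2).le, mul_pos h ha]
    · nlinarith [mul_nonneg hL (pow_pos ha 2).le, mul_nonneg hR ha.le]
  set d : ℂ := (L : ℂ) * s ^ 2 + (R : ℂ) * s + (D : ℂ) with hd_def
  have hsq : a ^ 2 = x ^ 2 + s.im ^ 2 := by
    rw [ha_def, Complex.sq_norm, Complex.normSq_apply]; ring
  have key : x * (L * a ^ 2 + R * a + D) ≤ ‖d‖ * a := by
    have h1 : (d * (starRingEnd ℂ) s).re ≤ ‖d‖ * a := by
      calc (d * (starRingEnd ℂ) s).re ≤ ‖d * (starRingEnd ℂ) s‖ :=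
            Complex.re_le_norm _
        _ = ‖d‖ * a := by rw [norm_mul, Complex.norm_conj]
    have h2 : (d * (starRingEnd ℂ) s).re
        = L * x * (x ^ 2 + s.im ^ 2) + R * (x ^ 2 + s.im ^ 2) + D * x := by
      simp [hd_def, Complex.mul_re, Complex.add_re, Complex.add_im, Complex.mul_im,
        pow_two]
      ring
    rw [h2] at h1
    have hRa : R * (a * x) ≤ R * (x ^ 2 + s.im ^ 2) := by
      rw [← hsq]
      have : a * x ≤ a ^ 2 := by nlinarith
      exact mul_le_mul_of_nonneg_left this hR
    rw [hsq]
    nlinarith [hRa, h1]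
  have hdpos : 0 < ‖d‖ := by
    rcases eq_or_ne d 0 with h | h
    · exfalso; rw [h] at key; simp at key; nlinarith
    · exact norm_pos_iff.mpr h
  rw [norm_div]
  have hR2 : a / x * (a / (L * a ^ 2 + R * a + D)) = a * a / (x * (L * a ^ 2 + R * a + D)) :=
    div_mul_div_comm a x a _
  rw [hR2, div_le_div_iff₀ hdpos (by positivity)]
  nlinarith [key, ha]
end

section
/- For any complex number s with Re s > 0 and nonnegative reals L, R, D with L + R + D > 0, the modulus of the admittance is controlled by its real part: |ρ_s| ≤ (|s| / Re s) · Re ρ_s. -/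
/-- |ρ_s| ≤ (|s|/Re s) · Re ρ_s. -/
theorem admittance_abs_le_re (s : ℂ) (hs : 0 < s.re) (L R D : ℝ)
    (hL : 0 ≤ L) (hR : 0 ≤ R) (hD : 0 ≤ D) (hsum : 0 < L + R + D) :
    ‖s / ((L : ℂ) * s ^ 2 + (R : ℂ) * s + (D : ℂ))‖ ≤
      (‖s‖ / s.re) * (s / ((L : ℂ) * s ^ 2 + (R : ℂ) * s + (D : ℂ))).re := by
  set Q : ℂ := (L : ℂ) * s ^ 2 + (R : ℂ) * s + (D : ℂ) with hQdef
  by_cases hQ : Q = 0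
  · simp [hQ]
  have hsne : s ≠ 0 := by
    intro h; rw [h] at hs; simp at hs
  have hA : 0 < ‖s‖ := norm_pos_iff.mpr hsne
  have hq : 0 < ‖Q‖ := norm_pos_iff.mpr hQ
  set A := ‖s‖ with hAdef
  set q := ‖Q‖ with hqdef
  set E : ℝ := s.re * Q.re + s.im * Q.im with hEdef
  have hns : Complex.normSq s = A ^ 2 := (Complex.sq_norm s).symm
  have hrA : s.re ≤ A := Complex.re_le_norm s
  have hE : E = L * s.re * (A ^ 2) + R * (A ^ 2) + D * s.re := by
    rw [← hns]
    simp only [hEdef, hQdef, Complex.add_re, Complex.add_im, Complex.mul_re,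
      Complex.mul_im, Complex.ofReal_re, Complex.ofReal_im, Complex.normSq_apply,
      pow_two, Complex.mul_re, Complex.mul_im]
    ring
  have hqb : q ≤ L * A ^ 2 + R * A + D := by
    have h1 : ‖Q‖ ≤ ‖(L : ℂ) * s ^ 2 + (R : ℂ) * s‖
        + ‖(D : ℂ)‖ := norm_add_le _ _
    have h2 : ‖(L : ℂ) * s ^ 2 + (R : ℂ) * s‖ ≤
        ‖(L : ℂ) * s ^ 2‖ + ‖(R : ℂ) * s‖ := norm_add_le _ _
    have h3 : ‖(L : ℂ) * s ^ 2‖ = L * A ^ 2 := by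
      simp [norm_mul, norm_pow, Complex.norm_real, abs_of_nonneg hL, hAdef]
    have h4 : ‖(R : ℂ) * s‖ = R * A := by
      simp [norm_mul, Complex.norm_real, abs_of_nonneg hR, hAdef]
    have h5 : ‖(D : ℂ)‖ = D := by
      simp [Complex.norm_real, abs_of_nonneg hD]
    calc q ≤ _ := h1
      _ ≤ ‖(L : ℂ) * s ^ 2‖ + ‖(R : ℂ) * s‖
          + ‖(D : ℂ)‖ := by linarith
      _ = L * A ^ 2 + R * A + D := by rw [h3, h4, h5]
  have key : s.re * q ≤ E := by
    have h6 : s.re * q ≤ s.re * (L * A ^ 2 + R * A + D) :=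
      mul_le_mul_of_nonneg_left hqb hs.le
    nlinarith [mul_nonneg hR (mul_nonneg hA.le (sub_nonneg.2 hrA))]
  have hgoal : A / q ≤ A / s.re * (E / Complex.normSq Q) := by
    rw [Complex.normSq_eq_norm_sq, ← hqdef, div_mul_div_comm,
      div_le_div_iff₀ hq (by positivity)]
    nlinarith [mul_le_mul_of_nonneg_left key (mul_pos hA hq).le]
  rw [norm_div, Complex.div_re, ← add_div]
  exact hgoal
end

section
/- For a complex number s with Re s > 0 and nonnegative reals L, R, D with L + R + D > 0, Re(1/ρ_s) ≥ (Re s / |s|) · (1/ρ_{|s|}), where ρ_s = s/(L s² + R s + D) and ρ_{|s|} = |s|/(L|s|² + R|s| + D). -/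
/-- Re(1/ρ_s) ≥ (Re s/|s|)·(1/ρ_{|s|}). -/
theorem admittance_inv_re_ge (s : ℂ) (hs : 0 < s.re) (L R D : ℝ)
    (hL : 0 ≤ L) (hR : 0 ≤ R) (hD : 0 ≤ D) (hsum : 0 < L + R + D) :
    (s.re / ‖s‖) *
        (1 / (‖s‖ / (L * (‖s‖) ^ 2 + R * ‖s‖ + D))) ≤
      (1 / (s / ((L : ℂ) * s ^ 2 + (R : ℂ) * s + (D : ℂ)))).re := by
  have hs0 : s ≠ 0 := fun h => by simp [h] at hs
  set a := ‖s‖ with ha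
  have ha0 : 0 < a := by
    rw [ha]; exact norm_pos_iff.mpr hs0
  have hrele : s.re ≤ a := Complex.re_le_norm s
  have hnormSq : Complex.normSq s = a ^ 2 := by
    rw [ha, ← Complex.sq_norm]
  have hnsq0 : Complex.normSq s ≠ 0 := by
    rw [hnormSq]; positivity
  have hpos : 0 < L ∨ 0 < R ∨ 0 < D := by
    by_contra h
    push_neg at h
    obtain ⟨h1, h2, h3⟩ := h
    have : L = 0 := le_antisymm h1 hL
    have : R = 0 := le_antisymm h2 hR
    have : D = 0 := le_antisymm h3 hD
    nlinarith
  have hre_expr : ((L:ℂ) * s + (R:ℂ) + (D:ℂ)/s).re = L * s.re + R + D * s.re / a^2 := by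
    simp [Complex.add_re, Complex.mul_re, Complex.div_re, hnormSq]
  have hPpos : 0 < L * s.re + R + D * s.re / a^2 := by
    have h1 : 0 ≤ L * s.re := mul_nonneg hL hs.le
    have h2 : 0 ≤ D * s.re / a^2 := by positivity
    rcases hpos with h | h | h
    · nlinarith
    · nlinarith
    · have : 0 < D * s.re / a^2 := by positivity
      nlinarith
  have hw2 : ((L:ℂ) * s + (R:ℂ) + (D:ℂ)/s) ≠ 0 := by
    intro h
    rw [show (0:ℂ) = ((0:ℝ):ℂ) by simp] at h
    have := congrArg Complex.re h
    rw [hre_expr] at this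
    simp at this
    linarith
  have key : (1 / (s / ((L:ℂ) * s ^ 2 + (R:ℂ) * s + (D:ℂ))))
      = (L:ℂ) * s + (R:ℂ) + (D:ℂ) / s := by
    have hw : (L:ℂ) * s ^ 2 + (R:ℂ) * s + (D:ℂ) = s * ((L:ℂ) * s + (R:ℂ) + (D:ℂ)/s) := by
      field_simp
    rw [hw]
    field_simp
  rw [key, hre_expr]
  have hden : 0 < L * a ^ 2 + R * a + D := by
    have h1 : 0 ≤ L * a ^ 2 := by positivity
    have h2 : 0 ≤ R * a := by positivity
    rcases hpos with h | h | h
    · nlinarith [mul_pos h (pow_pos ha0 2)]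
    · nlinarith [mul_pos h ha0]
    · nlinarith
  have hL1 : (s.re / a) * (1 / (a / (L * a ^ 2 + R * a + D)))
      = L * s.re + R * s.re / a + D * s.re / a^2 := by
    field_simp
  rw [hL1]
  have : R * s.re / a ≤ R := by
    rw [div_le_iff₀ ha0]
    nlinarith
  linarith
end

section
/- Under the assumptions of a finite set of edge admittances at a vertex x, the complex transition weights p_s(x,y) = ρ_s(x,y)/Σ_z ρ_s(x,z) satisfy |p_s(x,y)| ≤ (|s|/Re s) · p̌_s(x,y), where p̌_s(x,y) = |ρ_s(x,y)| / Σ_z |ρ_s(x,z)| is a stochastic kernel. -/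
lemma pos_combo (a c l r d : ℝ) (ha : 0 < a) (hc : 0 < c) (hl : 0 ≤ l) (hr : 0 ≤ r)
    (hd : 0 ≤ d) (hsum : 0 < l + r + d) :
    0 < l * a * c + r * c + d * a := by
  rcases hl.lt_or_eq with hl' | hl'
  · nlinarith [mul_pos (mul_pos hl' ha) hc, mul_nonneg hr hc.le, mul_nonneg hd ha.le]
  rcases hr.lt_or_eq with hr' | hr'
  · nlinarith [mul_pos hr' hc, mul_nonneg (mul_nonneg hl ha.le) hc.le, mul_nonneg hd ha.le]
  rcases hd.lt_or_eq with hd' | hd'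
  · nlinarith [mul_pos hd' ha, mul_nonneg (mul_nonneg hl ha.le) hc.le, mul_nonneg hr hc.le]
  · exfalso; rw [← hl', ← hr', ← hd'] at hsum; linarith

lemma q_ne_zero (s : ℂ) (hs : 0 < s.re) (l r d : ℝ) (hl : 0 ≤ l) (hr : 0 ≤ r)
    (hd : 0 ≤ d) (hsum : 0 < l + r + d) :
    (l : ℂ) * s ^ 2 + (r : ℂ) * s + (d : ℂ) ≠ 0 := by
  intro h
  have hs0 : s ≠ 0 := fun h => by simp [h] at hs
  have hn : 0 < Complex.normSq s := Complex.normSq_pos.2 hs0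
  set a := s.re; set b := s.im
  have hc : 0 < a ^ 2 + b ^ 2 := by
    have := hn; rwa [Complex.normSq_apply, ← pow_two, ← pow_two] at this
  have hre : ((l : ℂ) * s ^ 2 + (r : ℂ) * s + (d : ℂ)).re = 0 := by rw [h]; simp
  have him : ((l : ℂ) * s ^ 2 + (r : ℂ) * s + (d : ℂ)).im = 0 := by rw [h]; simp
  have h1 : l * (a ^ 2 - b ^ 2) + r * a + d = 0 := by
    simp only [Complex.add_re, Complex.mul_re, Complex.ofReal_re, Complex.ofReal_im, pow_two,
      Complex.mul_im] at hre
    linarith [hre]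
  have h2 : l * (2 * a * b) + r * b = 0 := by
    simp only [Complex.add_im, Complex.mul_im, Complex.ofReal_re, Complex.ofReal_im, pow_two,
      Complex.mul_re] at him
    linarith [him]
  have key : l * a * (a ^ 2 + b ^ 2) + r * (a ^ 2 + b ^ 2) + d * a = 0 := by
    linear_combination a * h1 + b * h2
  have := pos_combo a (a ^ 2 + b ^ 2) l r d hs hc hl hr hd hsum
  linarith

lemma key_ineq (s : ℂ) (hs : 0 < s.re) (l r d : ℝ) (hl : 0 ≤ l) (hr : 0 ≤ r)
    (hd : 0 ≤ d) (hsum : 0 < l + r + d) :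
    s.re * ‖(s / ((l : ℂ) * s ^ 2 + (r : ℂ) * s + (d : ℂ)))‖ ≤
      ‖s‖ * (s / ((l : ℂ) * s ^ 2 + (r : ℂ) * s + (d : ℂ))).re := by
  set q := (l : ℂ) * s ^ 2 + (r : ℂ) * s + (d : ℂ) with hqdef
  have hq : q ≠ 0 := q_ne_zero s hs l r d hl hr hd hsum
  have hs0 : s ≠ 0 := fun h => by simp [h] at hs
  have habs : 0 < ‖q‖ := norm_pos_iff.mpr hq
  have habs_s : 0 < ‖s‖ := norm_pos_iff.mpr hs0
  set a := s.re; set b := s.im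
  have hab : a ≤ ‖s‖ := Complex.re_le_norm s
  have hsq : (‖s‖) ^ 2 = a ^ 2 + b ^ 2 := by
    rw [Complex.sq_norm, Complex.normSq_apply]; ring
  have hdre : (s / q).re = (a * q.re + b * q.im) / Complex.normSq q := by
    rw [Complex.div_re]; ring
  have hdabs : ‖(s / q)‖ = ‖s‖ / ‖q‖ := norm_div _ _
  have hqre : q.re = l * (a ^ 2 - b ^ 2) + r * a + d := by
    simp only [hqdef, Complex.add_re, Complex.mul_re, Complex.ofReal_re, Complex.ofReal_im,
      pow_two, Complex.mul_im]
    ring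
  have hqim : q.im = l * (2 * a * b) + r * b := by
    simp only [hqdef, Complex.add_im, Complex.mul_im, Complex.ofReal_re, Complex.ofReal_im,
      pow_two, Complex.mul_re]
    ring
  have hnum : a * q.re + b * q.im = l * a * (a ^ 2 + b ^ 2) + r * (a ^ 2 + b ^ 2) + d * a := by
    rw [hqre, hqim]; ring
  have htri : ‖q‖ ≤ l * (‖s‖) ^ 2 + r * ‖s‖ + d := by
    calc ‖q‖
        ≤ ‖((l : ℂ) * s ^ 2)‖ + ‖((r : ℂ) * s)‖ + ‖(d : ℂ)‖ := by
          refine le_trans (norm_add_le _ _) ?_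
          gcongr
          exact norm_add_le _ _
      _ = l * (‖s‖) ^ 2 + r * ‖s‖ + d := by
          simp [map_mul, Complex.norm_real, abs_of_nonneg hl, abs_of_nonneg hr,
            abs_of_nonneg hd, map_pow]
  have hmain : a * ‖q‖ ≤ a * q.re + b * q.im := by
    rw [hnum]
    rw [hsq] at htri
    have h1' : a * ‖q‖ ≤ a * (l * (a ^ 2 + b ^ 2) + r * ‖s‖ + d) :=
      mul_le_mul_of_nonneg_left htri hs.le
    have h2' : a * ‖s‖ ≤ a ^ 2 + b ^ 2 := by nlinarith
    nlinarith [mul_le_mul_of_nonneg_left h2' hr]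
  rw [hdre, hdabs, Complex.normSq_eq_norm_sq]
  rw [show a * (‖s‖ / ‖q‖) = (a * ‖s‖) / ‖q‖ by ring,
    show ‖s‖ * ((a * q.re + b * q.im) / ‖q‖ ^ 2)
      = (‖s‖ * (a * q.re + b * q.im)) / ‖q‖ ^ 2 by ring,
    div_le_div_iff₀ habs (by positivity)]
  nlinarith [mul_le_mul_of_nonneg_left hmain (mul_nonneg habs_s.le habs.le)]

open Finset in
/-- |p_s(x,y)| ≤ (|s|/Re s)·p̌_s(x,y), where
p_s(x,y) = ρ_s(x,y)/Σ_z ρ_s(x,z) and p̌_s(x,y) = |ρ_s(x,y)|/Σ_z |ρ_s(x,z)|. -/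
theorem abs_transition_le_check (s : ℂ) (hs : 0 < s.re) {ι : Type*} [Fintype ι]
    (L R D : ι → ℝ) (hL : ∀ y, 0 ≤ L y) (hR : ∀ y, 0 ≤ R y) (hD : ∀ y, 0 ≤ D y)
    (hsum : ∀ y, 0 < L y + R y + D y) (y : ι) :
    ‖((s / ((L y : ℂ) * s ^ 2 + (R y : ℂ) * s + (D y : ℂ))) /
        ∑ z, s / ((L z : ℂ) * s ^ 2 + (R z : ℂ) * s + (D z : ℂ)))‖ ≤
      (‖s‖ / s.re) *
        (‖(s / ((L y : ℂ) * s ^ 2 + (R y : ℂ) * s + (D y : ℂ)))‖ /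
          ∑ z, ‖(s / ((L z : ℂ) * s ^ 2 + (R z : ℂ) * s + (D z : ℂ)))‖) := by
  have hs0 : s ≠ 0 := fun h => by simp [h] at hs
  have habs_s : 0 < ‖s‖ := norm_pos_iff.mpr hs0
  set ρ : ι → ℂ := fun z => s / ((L z : ℂ) * s ^ 2 + (R z : ℂ) * s + (D z : ℂ)) with hρ
  have hkey : ∀ z, s.re * ‖(ρ z)‖ ≤ ‖s‖ * (ρ z).re := fun z =>
    key_ineq s hs _ _ _ (hL z) (hR z) (hD z) (hsum z)
  have hρpos : ∀ z, 0 < ‖(ρ z)‖ := fun z =>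
    norm_pos_iff.mpr (div_ne_zero hs0 (q_ne_zero s hs _ _ _ (hL z) (hR z) (hD z) (hsum z)))
  have hS : 0 < ∑ z, ‖(ρ z)‖ :=
    Finset.sum_pos (fun z _ => hρpos z) ⟨y, mem_univ y⟩
  have hsumineq : s.re * ∑ z, ‖(ρ z)‖ ≤ ‖s‖ * ‖(∑ z, ρ z)‖ := by
    calc s.re * ∑ z, ‖(ρ z)‖ = ∑ z, s.re * ‖(ρ z)‖ := Finset.mul_sum _ _ _
      _ ≤ ∑ z, ‖s‖ * (ρ z).re := Finset.sum_le_sum fun z _ => hkey z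
      _ = ‖s‖ * (∑ z, ρ z).re := by rw [← Finset.mul_sum, Complex.re_sum]
      _ ≤ ‖s‖ * ‖(∑ z, ρ z)‖ := by
          gcongr; exact Complex.re_le_norm _
  have hT : 0 < ‖(∑ z, ρ z)‖ := by
    nlinarith [mul_pos hs hS]
  have hkey2 : (1 : ℝ) / ‖(∑ z, ρ z)‖
      ≤ (‖s‖ / s.re) / ∑ z, ‖(ρ z)‖ := by
    rw [div_le_div_iff₀ hT hS, one_mul, div_mul_eq_mul_div, le_div_iff₀ hs]
    linarith [hsumineq]
  rw [norm_div]
  calc ‖(ρ y)‖ / ‖(∑ z, ρ z)‖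
      = ‖(ρ y)‖ * ((1 : ℝ) / ‖(∑ z, ρ z)‖) := by ring
    _ ≤ ‖(ρ y)‖ * ((‖s‖ / s.re) / ∑ z, ‖(ρ z)‖) :=
        mul_le_mul_of_nonneg_left hkey2 (hρpos y).le
    _ = ‖s‖ / s.re * (‖(ρ y)‖ / ∑ z, ‖(ρ z)‖) := by ring
end

section
/- With the same setup, |p_s(x,y)| ≤ (|s|/Re s) · p̃_s(x,y), where p̃_s(x,y) = Re ρ_s(x,y) / Σ_z Re ρ_s(x,z) defines a stochastic transition kernel with positive entries on edges. -/
open Finset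

private lemma rho_facts (s : ℂ) (hs : 0 < s.re) (a b c : ℝ) (ha : 0 ≤ a) (hb : 0 ≤ b)
    (hc : 0 ≤ c) (habc : 0 < a + b + c) :
    0 < (s / ((a : ℂ) * s ^ 2 + (b : ℂ) * s + (c : ℂ))).re ∧
    ‖(s / ((a : ℂ) * s ^ 2 + (b : ℂ) * s + (c : ℂ)))‖ ≤
      (‖s‖ / s.re) * (s / ((a : ℂ) * s ^ 2 + (b : ℂ) * s + (c : ℂ))).re := by
  set w : ℂ := (a : ℂ) * s ^ 2 + (b : ℂ) * s + (c : ℂ) with hw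
  have hsne : s ≠ 0 := fun h => by simp [h] at hs
  have hK : 0 < Complex.normSq s := Complex.normSq_pos.2 hsne
  set N : ℝ := a * s.re * Complex.normSq s + b * Complex.normSq s + c * s.re with hN
  have hpos3 : 0 < a ∨ 0 < b ∨ 0 < c := by
    by_contra h; push_neg at h; obtain ⟨h1, h2, h3⟩ := h; linarith
  have hNpos : 0 < N := by
    rcases hpos3 with h | h | h
    · have : 0 < a * s.re * Complex.normSq s := by positivity
      nlinarith [mul_nonneg hb hK.le, mul_nonneg hc hs.le]
    · have : 0 < b * Complex.normSq s := by positivity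
      nlinarith [mul_nonneg (mul_nonneg ha hs.le) hK.le, mul_nonneg hc hs.le]
    · have : 0 < c * s.re := by positivity
      nlinarith [mul_nonneg (mul_nonneg ha hs.le) hK.le, mul_nonneg hb hK.le]
  have hdot : s.re * w.re + s.im * w.im = N := by
    simp [hw, hN, Complex.add_re, Complex.add_im, Complex.mul_re, Complex.mul_im,
      pow_two, Complex.normSq_apply]
    ring
  have hwne : w ≠ 0 := by
    intro h
    rw [h] at hdot
    simp at hdot
    rw [← hdot] at hNpos
    exact lt_irrefl _ hNpos
  have hnw : 0 < Complex.normSq w := Complex.normSq_pos.2 hwne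
  have hre : (s / w).re = N / Complex.normSq w := by
    rw [Complex.div_re, ← hdot]; ring
  have hRepos : 0 < (s / w).re := by rw [hre]; positivity
  refine ⟨hRepos, ?_⟩
  have hAw : 0 < ‖w‖ := (norm_pos_iff.mpr hwne)
  have hA : 0 < ‖s‖ := norm_pos_iff.mpr hsne
  have habsw : ‖w‖ ≤ a * (‖s‖)^2 + b * ‖s‖ + c := by
    calc ‖w‖ ≤ ‖((a:ℂ) * s ^ 2)‖ + ‖((b:ℂ)*s)‖ + ‖(c:ℂ)‖ := by
          refine (norm_add_le _ _).trans ?_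
          gcongr
          exact norm_add_le _ _
      _ = a * (‖s‖)^2 + b * ‖s‖ + c := by
          simp [norm_mul, Complex.norm_real, Real.norm_eq_abs, abs_of_nonneg ha, abs_of_nonneg hb,
            abs_of_nonneg hc, norm_pow]
  have hxA : s.re ≤ ‖s‖ := Complex.re_le_norm s
  have hKA : Complex.normSq s = (‖s‖)^2 := (Complex.sq_norm s).symm
  have hkey : s.re * ‖w‖ ≤ N := by
    rw [hN, hKA]
    nlinarith [mul_nonneg hb (mul_nonneg hs.le hA.le), mul_le_mul_of_nonneg_left habsw hs.le,
      mul_nonneg hb (mul_nonneg (sub_nonneg.2 hxA) hA.le)]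
  rw [norm_div, hre, Complex.normSq_eq_norm_sq, div_mul_div_comm,
    div_le_div_iff₀ hAw (by positivity)]
  nlinarith [mul_le_mul_of_nonneg_left hkey (mul_nonneg hA.le hAw.le)]

open Finset in
/-- |p_s(x,y)| ≤ (|s|/Re s)·p̃_s(x,y), where
p̃_s(x,y) = Re ρ_s(x,y)/Σ_z Re ρ_s(x,z). -/
theorem abs_transition_le_tilde (s : ℂ) (hs : 0 < s.re) {ι : Type*} [Fintype ι]
    (L R D : ι → ℝ) (hL : ∀ y, 0 ≤ L y) (hR : ∀ y, 0 ≤ R y) (hD : ∀ y, 0 ≤ D y)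
    (hsum : ∀ y, 0 < L y + R y + D y) (y : ι) :
    ‖((s / ((L y : ℂ) * s ^ 2 + (R y : ℂ) * s + (D y : ℂ))) /
        ∑ z, s / ((L z : ℂ) * s ^ 2 + (R z : ℂ) * s + (D z : ℂ)))‖ ≤
      (‖s‖ / s.re) *
        ((s / ((L y : ℂ) * s ^ 2 + (R y : ℂ) * s + (D y : ℂ))).re /
          ∑ z, (s / ((L z : ℂ) * s ^ 2 + (R z : ℂ) * s + (D z : ℂ))).re) := by
  set ρ : ι → ℂ := fun z => s / ((L z : ℂ) * s ^ 2 + (R z : ℂ) * s + (D z : ℂ)) with hρ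
  have hfacts := fun z => rho_facts s hs (L z) (R z) (D z) (hL z) (hR z) (hD z) (hsum z)
  have hRepos : ∀ z, 0 < (ρ z).re := fun z => (hfacts z).1
  have habs : ∀ z, ‖ρ z‖ ≤ (‖s‖ / s.re) * (ρ z).re :=
    fun z => (hfacts z).2
  have hSre : (∑ z, ρ z).re = ∑ z, (ρ z).re := Complex.re_sum _ _
  have hsumpos : 0 < ∑ z, (ρ z).re :=
    Finset.sum_pos (fun z _ => hRepos z) ⟨y, Finset.mem_univ y⟩
  have hSrepos : 0 < (∑ z, ρ z).re := by rw [hSre]; exact hsumpos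
  have hSabs : (∑ z, ρ z).re ≤ ‖∑ z, ρ z‖ := Complex.re_le_norm _
  rw [norm_div]
  calc ‖ρ y‖ / ‖∑ z, ρ z‖
      ≤ ((‖s‖ / s.re) * (ρ y).re) / (∑ z, (ρ z).re) := by
        apply div_le_div₀ (mul_nonneg (by positivity) (hRepos y).le) (habs y) hsumpos (hSre ▸ hSabs)
    _ = (‖s‖ / s.re) * ((ρ y).re / ∑ z, (ρ z).re) := mul_div_assoc _ _ _
end

section
/- With the same setup and t > 0 real, |p_s(x,y)| ≤ (|s|/Re s)² · p_t(x,y) when t = |s|, where p_t(x,y) = ρ_t(x,y)/Σ_z ρ_t(x,z) is the stochastic kernel at the positive real parameter t = |s|. -/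
open Finset in
set_option maxHeartbeats 1000000 in
/-- |p_s(x,y)| ≤ (|s|/Re s)²·p_{|s|}(x,y), where p_{|s|} is the stochastic
kernel at the positive real parameter t = |s|. -/
theorem abs_transition_le_sq (s : ℂ) (hs : 0 < s.re) {ι : Type*} [Fintype ι]
    (L R D : ι → ℝ) (hL : ∀ y, 0 ≤ L y) (hR : ∀ y, 0 ≤ R y) (hD : ∀ y, 0 ≤ D y)
    (hsum : ∀ y, 0 < L y + R y + D y) (y : ι) :
    ‖((s / ((L y : ℂ) * s ^ 2 + (R y : ℂ) * s + (D y : ℂ))) /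
        ∑ z, s / ((L z : ℂ) * s ^ 2 + (R z : ℂ) * s + (D z : ℂ)))‖ ≤
      (‖s‖ / s.re) ^ 2 *
        ((‖s‖ / (L y * ‖s‖ ^ 2 + R y * ‖s‖ + D y)) /
          ∑ z, ‖s‖ / (L z * ‖s‖ ^ 2 + R z * ‖s‖ + D z)) := by
  have hs0 : s ≠ 0 := fun h => by simp [h] at hs
  set t := ‖s‖ with ht_def
  have ht : 0 < t := norm_pos_iff.mpr hs0
  have hat : s.re ≤ t := Complex.re_le_norm s
  have h2 : s.re ^ 2 + s.im ^ 2 = t ^ 2 := by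
    rw [ht_def, Complex.sq_norm, Complex.normSq_apply]; ring
  set Qc : ι → ℂ := fun y => (L y : ℂ) * s ^ 2 + (R y : ℂ) * s + (D y : ℂ) with hQc
  set Qr : ι → ℝ := fun y => L y * t ^ 2 + R y * t + D y with hQr
  show ‖s / Qc y / ∑ z, s / Qc z‖ ≤
      (t / s.re) ^ 2 * ((t / Qr y) / ∑ z, t / Qr z)
  have hQrpos : ∀ y, 0 < Qr y := by
    intro y
    have h := hsum y
    have hLy := hL y; have hRy := hR y; have hDy := hD y
    simp only [hQr]
    nlinarith [mul_pos ht ht, mul_nonneg hLy (mul_pos ht ht).le, mul_nonneg hRy ht.le]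
  have habs_le : ∀ y, ‖Qc y‖ ≤ Qr y := by
    intro y
    calc ‖Qc y‖
        ≤ ‖(L y:ℂ)*s^2‖ + ‖(R y:ℂ)*s‖ + ‖(D y:ℂ)‖ := by
          refine le_trans (norm_add_le _ _) ?_
          gcongr
          exact norm_add_le _ _
      _ = Qr y := by
          simp [norm_mul, Complex.norm_real, norm_pow, abs_of_nonneg (hL y),
            abs_of_nonneg (hR y), abs_of_nonneg (hD y), hQr, ← ht_def]
  have hre : ∀ y, s.re * (Qc y).re + s.im * (Qc y).im
      = L y * t ^ 2 * s.re + R y * t ^ 2 + D y * s.re := by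
    intro y
    simp only [hQc, Complex.add_re, Complex.add_im, Complex.mul_re, Complex.mul_im,
      Complex.ofReal_re, Complex.ofReal_im, pow_two]
    linear_combination (L y * s.re + R y) * h2
  have key : ∀ y, s.re * (Qc y).re + s.im * (Qc y).im ≤ t * ‖Qc y‖ := by
    intro y
    have h := Complex.re_le_norm ((starRingEnd ℂ) s * Qc y)
    simp only [Complex.mul_re, Complex.conj_re, Complex.conj_im, map_mul,
      Complex.norm_conj, neg_mul, sub_neg_eq_add] at h
    exact le_of_le_of_eq h (by simp [norm_mul, Complex.norm_conj, ht_def])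
  have habs_lower : ∀ y, s.re * Qr y ≤ t * ‖Qc y‖ := by
    intro y
    have h1 := key y
    have h2 := hre y
    have hRy := hR y
    have : s.re * Qr y ≤ L y * t ^ 2 * s.re + R y * t ^ 2 + D y * s.re := by
      simp only [hQr]
      nlinarith [mul_nonneg hRy ht.le]
    linarith
  have hQabs_pos : ∀ y, 0 < ‖Qc y‖ := by
    intro y
    have := habs_lower y
    nlinarith [mul_pos hs (hQrpos y)]
  have hre_div : ∀ y, s.re / Qr y ≤ (s / Qc y).re := by
    intro y
    have hn : Complex.normSq (Qc y) = ‖Qc y‖ ^ 2 := (Complex.sq_norm _).symm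
    rw [Complex.div_re]
    have hnum : s.re * Qr y ≤ s.re * (Qc y).re + s.im * (Qc y).im := by
      rw [hre y]
      have hRy := hR y
      simp only [hQr]
      nlinarith [mul_nonneg hRy ht.le]
    have hNpos : 0 < Complex.normSq (Qc y) := by
      rw [hn]; exact pow_pos (hQabs_pos y) 2
    have hNle : Complex.normSq (Qc y) ≤ Qr y ^ 2 := by
      rw [hn]
      exact pow_le_pow_left₀ (norm_nonneg _) (habs_le y) 2
    have := div_le_div₀ (by nlinarith [mul_pos hs (hQrpos y)] : (0:ℝ) ≤ s.re * (Qc y).re + s.im * (Qc y).im)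
      hnum hNpos hNle
    calc s.re / Qr y = s.re * Qr y / Qr y ^ 2 := by
          field_simp [(hQrpos y).ne']
      _ ≤ (s.re * (Qc y).re + s.im * (Qc y).im) / Complex.normSq (Qc y) := this
      _ = s.re * (Qc y).re / Complex.normSq (Qc y) + s.im * (Qc y).im / Complex.normSq (Qc y) := by
          ring
  rcases isEmpty_or_nonempty ι with hι | hι
  · simp
  -- denominator bound
  have hden : s.re * ∑ z, 1 / Qr z ≤ ‖∑ z, s / Qc z‖ := by
    refine le_trans ?_ (Complex.re_le_norm _)
    rw [Complex.re_sum, Finset.mul_sum]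
    refine Finset.sum_le_sum fun z _ => ?_
    have := hre_div z
    rw [mul_one_div]
    exact this
  have hSpos : 0 < ∑ z, 1 / Qr z :=
    Finset.sum_pos (fun z _ => one_div_pos.mpr (hQrpos z)) Finset.univ_nonempty
  have hnum_bound : ‖s / Qc y‖ ≤ t ^ 2 / (s.re * Qr y) := by
    rw [norm_div]
    rw [div_le_div_iff₀ (hQabs_pos y) (mul_pos hs (hQrpos y))]
    calc t * (s.re * Qr y) = s.re * Qr y * t := by ring
      _ ≤ t * ‖Qc y‖ * t := by
          have := habs_lower y
          nlinarith
      _ = t ^ 2 * ‖Qc y‖ := by ring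
  have hdpos : 0 < s.re * ∑ z, 1 / Qr z := mul_pos hs hSpos
  have main : ‖s / Qc y / ∑ z, s / Qc z‖
      ≤ (t ^ 2 / (s.re * Qr y)) / (s.re * ∑ z, 1 / Qr z) := by
    rw [norm_div]
    exact div_le_div₀ (div_nonneg (by positivity) (mul_pos hs (hQrpos y)).le) hnum_bound hdpos hden
  refine main.trans (le_of_eq ?_)
  have hsum_t : ∑ z, t / Qr z = t * ∑ z, 1 / Qr z := by
    rw [Finset.mul_sum]
    exact Finset.sum_congr rfl fun z _ => by rw [mul_one_div]
  rw [hsum_t]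
  field_simp [hs.ne', (hQrpos y).ne', hSpos.ne', ht.ne']
end

section
/- For s ∈ ℂ with Re s > 0 and a single edge with parameters L, R, D ≥ 0 (sum > 0), one has Re ρ_s ≥ (Re s / max{1, |s|²}) · ρ_1, where ρ_s = s/(L s² + R s + D) and ρ_1 = 1/(L + R + D). -/
/-- Re ρ_s ≥ (Re s / max{1,|s|²})·ρ_1, where ρ_s = s/(L s² + R s + D) and
ρ_1 = 1/(L + R + D). -/
theorem admittance_re_ge (s : ℂ) (hs : 0 < s.re) (L R D : ℝ)
    (hL : 0 ≤ L) (hR : 0 ≤ R) (hD : 0 ≤ D) (hsum : 0 < L + R + D) :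
    (s.re / max 1 (‖s‖ ^ 2)) * (1 / (L + R + D)) ≤
      (s / ((L : ℂ) * s ^ 2 + (R : ℂ) * s + (D : ℂ))).re := by
  have hs0 : s ≠ 0 := fun h => by simp [h] at hs
  set x := s.re with hx
  set y := s.im with hy
  set a := ‖s‖ with ha
  have ha0 : 0 < a := by simpa [ha] using norm_pos_iff.mpr hs0
  have ha2 : a ^ 2 = x ^ 2 + y ^ 2 := by
    rw [ha, Complex.sq_norm, Complex.normSq_apply]; ring
  have hxa : x ≤ a := Complex.re_le_norm s
  set w : ℂ := (L : ℂ) * s ^ 2 + (R : ℂ) * s + (D : ℂ) with hw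
  have hwre : w.re = L * (x ^ 2 - y ^ 2) + R * x + D := by
    simp only [hw, Complex.add_re, Complex.mul_re, Complex.mul_im, Complex.ofReal_re,
      Complex.ofReal_im, sq, hx, hy]
    ring
  have hwim : w.im = L * (2 * x * y) + R * y := by
    simp only [hw, Complex.add_im, Complex.mul_re, Complex.mul_im, Complex.ofReal_re,
      Complex.ofReal_im, sq, hx, hy]
    ring
  have hnum : x * w.re + y * w.im = L * a ^ 2 * x + R * a ^ 2 + D * x := by
    rw [hwre, hwim, ha2]; ring
  have hApos : 0 < L * a ^ 2 * x + R * a ^ 2 + D * x := by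
    rcases lt_or_ge 0 L with hL' | hL'
    · have := mul_pos (mul_pos hL' (pow_pos ha0 2)) hs
      nlinarith [mul_nonneg hR (sq_nonneg a), mul_nonneg hD hs.le]
    · have hL0 : L = 0 := le_antisymm hL' hL
      rcases lt_or_ge 0 R with hR' | hR'
      · nlinarith [mul_pos hR' (pow_pos ha0 2), mul_nonneg hD hs.le,
          mul_nonneg (mul_nonneg hL (sq_nonneg a)) hs.le]
      · have hR0 : R = 0 := le_antisymm hR' hR
        have hD' : 0 < D := by linarith
        nlinarith [mul_pos hD' hs, mul_nonneg (mul_nonneg hL (sq_nonneg a)) hs.le,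
          mul_nonneg hR (sq_nonneg a)]
  have hw0 : w ≠ 0 := by
    intro h
    rw [h] at hnum
    simp at hnum
    nlinarith [hApos]
  have hwpos : 0 < ‖w‖ := norm_pos_iff.mpr hw0
  have hwle : ‖w‖ ≤ L * a ^ 2 + R * a + D := by
    calc ‖w‖ ≤ ‖(L : ℂ) * s ^ 2 + (R : ℂ) * s‖ + ‖(D : ℂ)‖ :=
          norm_add_le _ _
      _ ≤ ‖(L : ℂ) * s ^ 2‖ + ‖(R : ℂ) * s‖ + ‖(D : ℂ)‖ := by
          have := norm_add_le ((L : ℂ) * s ^ 2) ((R : ℂ) * s)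
          linarith
      _ = L * a ^ 2 + R * a + D := by
          simp [norm_mul, norm_pow, Complex.norm_real, abs_of_nonneg hL, abs_of_nonneg hR,
            abs_of_nonneg hD, ha]
  have hdiv : (s / w).re = (x * w.re + y * w.im) / ‖w‖ ^ 2 := by
    rw [Complex.div_re, Complex.sq_norm]; ring
  rw [hdiv, hnum]
  have hb0 : 0 < ‖w‖ := hwpos
  have hble : ‖w‖ ≤ L * a ^ 2 + R * a + D := hwle
  clear_value x y a
  generalize ‖w‖ = b at hb0 hble ⊢
  clear hw hwre hwim hnum hdiv hs0 hwpos hwle hw0 hx hy ha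
  clear w s
  set M := max 1 (a ^ 2) with hM
  have hM1 : (1 : ℝ) ≤ M := le_max_left _ _
  have hM0 : 0 < M := lt_of_lt_of_le one_pos hM1
  have hMa : a ^ 2 ≤ M := le_max_right _ _
  have haM : a ≤ M := by
    rcases le_or_gt a 1 with h | h
    · exact le_trans h hM1
    · refine le_trans ?_ hMa
      nlinarith
  have hble2 : b ≤ (L + R + D) * M := by
    have h1 : L * a ^ 2 ≤ L * M := mul_le_mul_of_nonneg_left hMa hL
    have h2 : R * a ≤ R * M := mul_le_mul_of_nonneg_left haM hR
    have h3 : D ≤ D * M := le_mul_of_one_le_right hD hM1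
    linarith
  have hxB : x * b ≤ L * a ^ 2 * x + R * a ^ 2 + D * x := by
    have h4 : x * b ≤ x * (L * a ^ 2 + R * a + D) := mul_le_mul_of_nonneg_left hble hs.le
    have h5 : 0 ≤ R * (a * (a - x)) := mul_nonneg hR (mul_nonneg ha0.le (sub_nonneg.mpr hxa))
    nlinarith [h4, h5]
  rw [div_mul_eq_mul_div, mul_one_div, div_div,
    div_le_div_iff₀ (mul_pos hsum hM0) (pow_pos hb0 2)]
  calc x * b ^ 2 = (x * b) * b := by ring
    _ ≤ (L * a ^ 2 * x + R * a ^ 2 + D * x) * b := mul_le_mul_of_nonneg_right hxB hb0.le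
    _ ≤ (L * a ^ 2 * x + R * a ^ 2 + D * x) * ((L + R + D) * M) :=
        mul_le_mul_of_nonneg_left hble2 hApos.le
end

section
/- Let μ be a finitely supported symmetric complex function on a group Γ with Σ_x μ(x) = 1 arising from μ_s(x) = ρ_s(e,x)/ρ_s(e) with all ρ_s(e,x) of admittance form at parameter s ∈ ℂ, Re s > 0. Then the total variation satisfies Σ_x |μ_s(x)| ≤ |s| / Re s. -/
open Finset

/-- for μ_s(a) = ρ_s(e,a)/Σ_b ρ_s(e,b) over a finite (symmetric generating)
set, the total variation satisfies Σ_a |μ_s(a)| ≤ |s|/Re s. -/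
theorem total_variation_le (s : ℂ) (hs : 0 < s.re) {ι : Type*} [Fintype ι]
    (L R D : ι → ℝ) (hL : ∀ a, 0 ≤ L a) (hR : ∀ a, 0 ≤ R a) (hD : ∀ a, 0 ≤ D a)
    (hsum : ∀ a, 0 < L a + R a + D a) :
    ∑ a, ‖(s / ((L a : ℂ) * s ^ 2 + (R a : ℂ) * s + (D a : ℂ))) /
        ∑ b, s / ((L b : ℂ) * s ^ 2 + (R b : ℂ) * s + (D b : ℂ))‖ ≤
      ‖s‖ / s.re := by
  set q : ι → ℂ := fun a => (L a : ℂ) * s ^ 2 + (R a : ℂ) * s + (D a : ℂ) with hq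
  set ρ : ι → ℂ := fun a => s / q a with hρ
  have hs0 : s ≠ 0 := fun h => by simp [h] at hs
  have habs : 0 < ‖s‖ := norm_pos_iff.mpr hs0
  have hn : 0 < Complex.normSq s := Complex.normSq_pos.mpr hs0
  -- real part computations
  have hNre : ∀ a, s.re * (q a).re + s.im * (q a).im
      = L a * (s.re * Complex.normSq s) + R a * Complex.normSq s + D a * s.re := by
    intro a
    simp [hq, Complex.normSq_apply, pow_two, Complex.add_re, Complex.add_im,
      Complex.mul_re, Complex.mul_im]
    ring
  have hNpos : ∀ a, 0 < L a * (s.re * Complex.normSq s) + R a * Complex.normSq s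
      + D a * s.re := by
    intro a
    have h1 : 0 < s.re * Complex.normSq s := mul_pos hs hn
    rcases lt_trichotomy (L a) 0 with h | h | h
    · exact absurd h (not_lt.mpr (hL a))
    · rcases lt_trichotomy (R a) 0 with h2 | h2 | h2
      · exact absurd h2 (not_lt.mpr (hR a))
      · have hD' : 0 < D a := by have := hsum a; simp [← h, ← h2] at this; linarith
        nlinarith [mul_pos hD' hs]
      · nlinarith [mul_pos h2 hn, mul_nonneg (hD a) hs.le]
    · nlinarith [mul_pos h h1, mul_nonneg (hR a) hn.le, mul_nonneg (hD a) hs.le]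
  have hqne : ∀ a, q a ≠ 0 := by
    intro a h
    have := hNre a
    rw [h] at this
    simp at this
    nlinarith [hNpos a]
  have hρre : ∀ a, (ρ a).re = (L a * (s.re * Complex.normSq s) + R a * Complex.normSq s
      + D a * s.re) / Complex.normSq (q a) := by
    intro a
    rw [hρ]
    simp only [Complex.div_re]
    rw [← hNre a]
    ring
  have hρrepos : ∀ a, 0 < (ρ a).re := by
    intro a
    rw [hρre a]
    exact div_pos (hNpos a) (Complex.normSq_pos.mpr (hqne a))
  -- key: s.re * |ρ a| ≤ |s| * (ρ a).re
  have hkey : ∀ a, s.re * ‖ρ a‖ ≤ ‖s‖ * (ρ a).re := by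
    intro a
    have hqa : 0 < ‖q a‖ := by
      simpa [norm_ne_zero_iff] using (norm_pos_iff.mpr (hqne a))
    have htri : ‖q a‖ ≤ L a * ‖s‖ ^ 2 + R a * ‖s‖ + D a := by
      calc ‖q a‖ ≤ ‖(L a : ℂ) * s ^ 2‖ + ‖(R a : ℂ) * s‖
            + ‖(D a : ℂ)‖ := by
            rw [hq]
            refine le_trans (norm_add_le _ _) ?_
            gcongr
            exact norm_add_le _ _
        _ = L a * ‖s‖ ^ 2 + R a * ‖s‖ + D a := by
            simp [norm_mul, norm_pow, Complex.norm_real, Real.norm_eq_abs, abs_of_nonneg (hL a), abs_of_nonneg (hR a),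
              abs_of_nonneg (hD a)]
    have hre_le : s.re ≤ ‖s‖ := Complex.re_le_norm s
    have hsq : ‖s‖ ^ 2 = Complex.normSq s := Complex.sq_norm s
    -- need: s.re * |q a| ≤ N a
    have hN : s.re * ‖q a‖ ≤ L a * (s.re * Complex.normSq s)
        + R a * Complex.normSq s + D a * s.re := by
      rw [← hsq]
      have h1 : s.re * ‖q a‖ ≤ s.re * (L a * ‖s‖ ^ 2
          + R a * ‖s‖ + D a) := by
        exact mul_le_mul_of_nonneg_left htri hs.le
      have h2 : s.re * ‖s‖ ≤ ‖s‖ ^ 2 := by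
        rw [pow_two]
        exact mul_le_mul_of_nonneg_right hre_le habs.le
      nlinarith [h1, mul_le_mul_of_nonneg_left h2 (hR a), hL a, hs]
    rw [hρre a]
    have habsρ : ‖ρ a‖ = ‖s‖ / ‖q a‖ := by
      rw [hρ]; simp [norm_div]
    rw [habsρ, ← Complex.sq_norm (q a)]
    have e1 : s.re * (‖s‖ / ‖q a‖)
        = s.re * ‖q a‖ * ‖s‖ / ‖q a‖ ^ 2 := by
      field_simp
    have e2 : ‖s‖ * ((L a * (s.re * Complex.normSq s) + R a * Complex.normSq s
        + D a * s.re) / ‖q a‖ ^ 2)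
        = (L a * (s.re * Complex.normSq s) + R a * Complex.normSq s + D a * s.re)
          * ‖s‖ / ‖q a‖ ^ 2 := by ring
    rw [e1, e2, div_le_div_iff₀ (by positivity) (by positivity)]
    nlinarith [mul_le_mul_of_nonneg_right hN habs.le, sq_nonneg (‖q a‖)]
  -- total
  set T : ℂ := ∑ b, ρ b with hT
  rcases isEmpty_or_nonempty ι with hι | hι
  · simp [univ_eq_empty]
    positivity
  · have hTre : 0 < T.re := by
      rw [hT, Complex.re_sum]
      exact Finset.sum_pos (fun a _ => hρrepos a) univ_nonempty
    have hTabs : 0 < ‖T‖ := lt_of_lt_of_le hTre (Complex.re_le_norm T)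
    have hsum_key : s.re * ∑ a, ‖ρ a‖ ≤ ‖s‖ * ‖T‖ := by
      calc s.re * ∑ a, ‖ρ a‖ = ∑ a, s.re * ‖ρ a‖ := by
            rw [Finset.mul_sum]
        _ ≤ ∑ a, ‖s‖ * (ρ a).re := Finset.sum_le_sum fun a _ => hkey a
        _ = ‖s‖ * T.re := by rw [hT, Complex.re_sum, Finset.mul_sum]
        _ ≤ ‖s‖ * ‖T‖ :=
            mul_le_mul_of_nonneg_left (Complex.re_le_norm T) habs.le
    have : ∑ a, ‖ρ a / T‖ = (∑ a, ‖ρ a‖) / ‖T‖ := by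
      rw [Finset.sum_div]
      exact Finset.sum_congr rfl fun a _ => by rw [norm_div]
    calc ∑ a, ‖ρ a / T‖ = (∑ a, ‖ρ a‖) / ‖T‖ := this
      _ ≤ ‖s‖ / s.re := by
          rw [div_le_div_iff₀ hTabs hs]
          nlinarith [hsum_key]
end
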